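/- Stochastic monotonicity for Fisher's test under the alternative: let C₁ ~ Binomial(n, p₁) and C₂ ~ Binomial(n, p₂) be independent. If p₁ ≤ p₂ (with 0 < p₁, p₂ < 1), then for every s and every threshold c, P(C₁ ≥ c | C₁ + C₂ = s) ≤ P(H ≥ c), where H ~ Hypergeometric(2n, n, s). -/

import Mathlib

open MeasureTheory ProbabilityTheory

lemma fisher_cross (S : Finset ℕ) (a w : ℕ → ℝ)
    (hLR : ∀ j ∈ S, ∀ k ∈ S, j ≤ k → w k * a j ≤ w j * a k) (c : ℕ) :
    (∑ k ∈ S, if c ≤ k then w k else 0) * (∑ k ∈ S, a k) ≤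
    (∑ k ∈ S, if c ≤ k then a k else 0) * (∑ k ∈ S, w k) := by
  set f : ℕ → ℕ → ℝ := fun j k =>
    (if c ≤ j then a j else 0) * w k - (if c ≤ j then w j else 0) * a k with hf
  have key : ∀ j ∈ S, ∀ k ∈ S, 0 ≤ f j k + f k j := by
    intro j hj k hk
    rcases le_total j k with hjk | hjk
    · by_cases hcj : c ≤ j
      · have hck : c ≤ k := hcj.trans hjk
        simp only [hf, if_pos hcj, if_pos hck]; ring_nf; exact le_refl _
      · by_cases hck : c ≤ k
        · simp only [hf, if_neg hcj, if_pos hck, zero_mul, sub_zero, mul_zero, zero_sub]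
          have := hLR j hj k hk hjk
          linarith
        · simp [hf, if_neg hcj, if_neg hck]
    · by_cases hck : c ≤ k
      · have hcj : c ≤ j := hck.trans hjk
        simp only [hf, if_pos hcj, if_pos hck]; ring_nf; exact le_refl _
      · by_cases hcj : c ≤ j
        · simp only [hf, if_neg hck, if_pos hcj, zero_mul, sub_zero, mul_zero, zero_sub]
          have := hLR k hk j hj hjk
          linarith
        · simp [hf, if_neg hcj, if_neg hck]
  have hsum : 0 ≤ ∑ j ∈ S, ∑ k ∈ S, (f j k + f k j) := by
    apply Finset.sum_nonneg; intro j hj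
    apply Finset.sum_nonneg; intro k hk
    exact key j hj k hk
  have hswap : ∑ j ∈ S, ∑ k ∈ S, f k j = ∑ j ∈ S, ∑ k ∈ S, f j k := Finset.sum_comm
  have hD : 0 ≤ ∑ j ∈ S, ∑ k ∈ S, f j k := by
    have : ∑ j ∈ S, ∑ k ∈ S, (f j k + f k j)
        = (∑ j ∈ S, ∑ k ∈ S, f j k) + (∑ j ∈ S, ∑ k ∈ S, f k j) := by
      rw [← Finset.sum_add_distrib]
      congr 1; ext j; rw [← Finset.sum_add_distrib]
    rw [this, hswap] at hsum
    linarith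
  have expand : ∑ j ∈ S, ∑ k ∈ S, f j k
      = (∑ k ∈ S, if c ≤ k then a k else 0) * (∑ k ∈ S, w k)
        - (∑ k ∈ S, if c ≤ k then w k else 0) * (∑ k ∈ S, a k) := by
    rw [Finset.sum_mul_sum, Finset.sum_mul_sum]
    rw [← Finset.sum_sub_distrib]
    congr 1; ext j; rw [← Finset.sum_sub_distrib]
  linarith [expand ▸ hD]

lemma fisher_pow_ineq (p₁ p₂ : ℝ) (hp₁0 : 0 < p₁) (hp₂1 : p₂ < 1) (hle : p₁ ≤ p₂)
    (hp₂0 : 0 < p₂)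
    (n s j k : ℕ) (hjk : j ≤ k) (hks : k ≤ s) (hkn : k ≤ n) (hsjn : s - j ≤ n) :
    p₁ ^ k * (1 - p₁) ^ (n - k) * p₂ ^ (s - k) * (1 - p₂) ^ (n - (s - k)) ≤
    p₁ ^ j * (1 - p₁) ^ (n - j) * p₂ ^ (s - j) * (1 - p₂) ^ (n - (s - j)) := by
  have hq₁ : (0:ℝ) < 1 - p₁ := by linarith
  have hq₂ : (0:ℝ) < 1 - p₂ := by linarith
  have f1 : p₁ ^ k = p₁ ^ j * p₁ ^ (k - j) := by rw [← pow_add]; congr 1; omega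
  have f2 : (1 - p₂) ^ (n - (s - k)) = (1 - p₂) ^ (n - (s - j)) * (1 - p₂) ^ (k - j) := by
    rw [← pow_add]; congr 1; omega
  have f3 : (1 - p₁) ^ (n - j) = (1 - p₁) ^ (n - k) * (1 - p₁) ^ (k - j) := by
    rw [← pow_add]; congr 1; omega
  have f4 : p₂ ^ (s - j) = p₂ ^ (s - k) * p₂ ^ (k - j) := by rw [← pow_add]; congr 1; omega
  rw [f1, f2, f3, f4]
  have hQ : 0 ≤ p₁ ^ j * (1 - p₁) ^ (n - k) * p₂ ^ (s - k) * (1 - p₂) ^ (n - (s - j)) := by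
    positivity
  have hbase : p₁ * (1 - p₂) ≤ p₂ * (1 - p₁) := by nlinarith
  have hd : (p₁ * (1 - p₂)) ^ (k - j) ≤ (p₂ * (1 - p₁)) ^ (k - j) :=
    pow_le_pow_left₀ (by positivity) hbase _
  calc p₁ ^ j * p₁ ^ (k-j) * (1 - p₁) ^ (n - k) * p₂ ^ (s - k) *
        ((1 - p₂) ^ (n - (s - j)) * (1 - p₂) ^ (k-j))
      = (p₁ ^ j * (1 - p₁) ^ (n - k) * p₂ ^ (s - k) * (1 - p₂) ^ (n - (s - j))) *
        (p₁ * (1 - p₂)) ^ (k - j) := by rw [mul_pow]; ring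
    _ ≤ (p₁ ^ j * (1 - p₁) ^ (n - k) * p₂ ^ (s - k) * (1 - p₂) ^ (n - (s - j))) *
        (p₂ * (1 - p₁)) ^ (k - j) := mul_le_mul_of_nonneg_left hd hQ
    _ = p₁ ^ j * ((1 - p₁) ^ (n - k) * (1 - p₁) ^ (k-j)) * (p₂ ^ (s - k) * p₂ ^ (k-j)) *
        (1 - p₂) ^ (n - (s - j)) := by rw [mul_pow]; ring

/-- **Stochastic monotonicity for Fisher's test under the alternative.**
Let `C₁ ~ Binomial(n, p₁)` and `C₂ ~ Binomial(n, p₂)` be independent with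
`0 < p₁ ≤ p₂ < 1`.  Then for every `s ≤ 2n` and every threshold `c`,
`P(C₁ ≥ c | C₁ + C₂ = s) ≤ P(H ≥ c)` where `H ~ Hypergeometric(2n, n, s)`, i.e. the
conditional upper tail is dominated by the central hypergeometric upper tail
`(Σ_{k ≥ c} C(n,k)·C(n,s−k)) / C(2n,s)`. -/
theorem fisher_tail_monotone
    {Ω : Type*} [MeasurableSpace Ω] (μ : Measure Ω) [IsProbabilityMeasure μ]
    (n s : ℕ) (hs : s ≤ 2 * n)
    (p₁ p₂ : ℝ) (hp₁0 : 0 < p₁) (hp₂1 : p₂ < 1) (hle : p₁ ≤ p₂)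
    (hp₁1 : p₁ < 1) (hp₂0 : 0 < p₂)
    (C₁ C₂ : Ω → ℕ) (hm₁ : Measurable C₁) (hm₂ : Measurable C₂)
    (hindep : IndepFun C₁ C₂ μ)
    (h₁ : ∀ k, (μ {ω | C₁ ω = k}).toReal = (n.choose k : ℝ) * p₁ ^ k * (1 - p₁) ^ (n - k))
    (h₂ : ∀ k, (μ {ω | C₂ ω = k}).toReal = (n.choose k : ℝ) * p₂ ^ k * (1 - p₂) ^ (n - k)) :
    ∀ c : ℕ,
      (μ ({ω | c ≤ C₁ ω} ∩ {ω | C₁ ω + C₂ ω = s})).toReal /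
          (μ {ω | C₁ ω + C₂ ω = s}).toReal ≤
        (∑ k ∈ Finset.range (s + 1),
          if c ≤ k then (n.choose k : ℝ) * (n.choose (s - k)) else 0) /
          ((2 * n).choose s) := by
  intro c
  set R := Finset.range (s + 1) with hR
  set A : ℕ → Set Ω := fun k => {ω | C₁ ω = k} ∩ {ω | C₂ ω = s - k} with hA
  set w : ℕ → ℝ := fun k => (μ {ω | C₁ ω = k}).toReal * (μ {ω | C₂ ω = s - k}).toReal with hw
  set a : ℕ → ℝ := fun k => (n.choose k : ℝ) * (n.choose (s - k)) with ha
  have hq₁ : (0:ℝ) < 1 - p₁ := by linarith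
  have hq₂ : (0:ℝ) < 1 - p₂ := by linarith
  -- measurability of the pieces
  have hmA : ∀ k, MeasurableSet (A k) := by
    intro k
    exact (hm₁ (measurableSet_singleton k)).inter (hm₂ (measurableSet_singleton (s - k)))
  -- disjointness
  have hdisj : (↑R : Set ℕ).PairwiseDisjoint A := by
    intro j _ k _ hjk
    refine Set.disjoint_left.2 fun ω hωj hωk => hjk ?_
    have e1 : C₁ ω = j := hωj.1
    have e2 : C₁ ω = k := hωk.1
    omega
  -- measure of A k
  have hmuA : ∀ k, (μ (A k)).toReal = w k := by
    intro k
    have : μ (A k) = μ {ω | C₁ ω = k} * μ {ω | C₂ ω = s - k} := by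
      have := hindep.measure_inter_preimage_eq_mul
        (s := ({k} : Set ℕ)) (t := ({s - k} : Set ℕ))
        (measurableSet_singleton k) (measurableSet_singleton (s - k))
      exact this
    rw [this, ENNReal.toReal_mul]
  -- denominator decomposition
  have hden_set : {ω | C₁ ω + C₂ ω = s} = ⋃ k ∈ R, A k := by
    ext ω
    simp only [Set.mem_setOf_eq, Set.mem_iUnion, hA, Set.mem_inter_iff, hR,
      Finset.mem_range, Set.mem_setOf_eq]
    constructor
    · intro h; exact ⟨C₁ ω, by omega, rfl, by omega⟩
    · rintro ⟨k, hk, e1, e2⟩; omega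
  have hden : (μ {ω | C₁ ω + C₂ ω = s}).toReal = ∑ k ∈ R, w k := by
    rw [hden_set, measure_biUnion_finset hdisj (fun k _ => hmA k),
      ENNReal.toReal_sum (fun k _ => measure_ne_top μ _)]
    exact Finset.sum_congr rfl fun k _ => hmuA k
  -- numerator decomposition
  have hnum_set : {ω | c ≤ C₁ ω} ∩ {ω | C₁ ω + C₂ ω = s}
      = ⋃ k ∈ R.filter (fun k => c ≤ k), A k := by
    ext ω
    simp only [Set.mem_inter_iff, Set.mem_setOf_eq, Set.mem_iUnion, hA, hR,
      Finset.mem_filter, Finset.mem_range]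
    constructor
    · rintro ⟨hc, h⟩; exact ⟨C₁ ω, ⟨by omega, hc⟩, rfl, by omega⟩
    · rintro ⟨k, ⟨hk, hck⟩, e1, e2⟩; constructor <;> omega
  have hnum : (μ ({ω | c ≤ C₁ ω} ∩ {ω | C₁ ω + C₂ ω = s})).toReal
      = ∑ k ∈ R, if c ≤ k then w k else 0 := by
    rw [hnum_set, measure_biUnion_finset (hdisj.subset (Finset.coe_subset.2 (Finset.filter_subset _ _)))
      (fun k _ => hmA k),
      ENNReal.toReal_sum (fun k _ => measure_ne_top μ _), Finset.sum_filter]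
    exact Finset.sum_congr rfl fun k _ => by split <;> simp [hmuA k]
  -- w in closed form
  have hwk : ∀ k, w k = ((n.choose k : ℝ) * p₁ ^ k * (1 - p₁) ^ (n - k)) *
      ((n.choose (s - k) : ℝ) * p₂ ^ (s - k) * (1 - p₂) ^ (n - (s - k))) := by
    intro k; rw [hw]; simp only [h₁ k, h₂ (s - k)]
  -- nonnegativity
  have hwnn : ∀ k, 0 ≤ w k := fun k => mul_nonneg ENNReal.toReal_nonneg ENNReal.toReal_nonneg
  have hann : ∀ k, 0 ≤ a k := fun k => by positivity
  -- likelihood ratio condition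
  have hLR : ∀ j ∈ R, ∀ k ∈ R, j ≤ k → w k * a j ≤ w j * a k := by
    intro j hj k hk hjk
    have hks : k ≤ s := by simpa [hR, Nat.lt_succ_iff] using hk
    by_cases hkn : k ≤ n
    · by_cases hsjn : s - j ≤ n
      · have hP := fisher_pow_ineq p₁ p₂ hp₁0 hp₂1 hle hp₂0 n s j k hjk hks hkn hsjn
        have hCC : (0:ℝ) ≤ (n.choose k : ℝ) * (n.choose (s - k)) *
            ((n.choose j : ℝ) * (n.choose (s - j))) := by positivity
        calc w k * a j
            = ((n.choose k : ℝ) * (n.choose (s - k)) * ((n.choose j : ℝ) * (n.choose (s - j)))) *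
              (p₁ ^ k * (1 - p₁) ^ (n - k) * p₂ ^ (s - k) * (1 - p₂) ^ (n - (s - k))) := by
              rw [hwk k, ha]; ring
          _ ≤ ((n.choose k : ℝ) * (n.choose (s - k)) * ((n.choose j : ℝ) * (n.choose (s - j)))) *
              (p₁ ^ j * (1 - p₁) ^ (n - j) * p₂ ^ (s - j) * (1 - p₂) ^ (n - (s - j))) :=
              mul_le_mul_of_nonneg_left hP hCC
          _ = w j * a k := by rw [hwk j, ha]; ring
      · have : a j = 0 := by
          have : n.choose (s - j) = 0 := Nat.choose_eq_zero_of_lt (by omega)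
          simp [ha, this]
        rw [this, mul_zero]
        exact mul_nonneg (hwnn j) (hann k)
    · have : w k = 0 := by
        have : n.choose k = 0 := Nat.choose_eq_zero_of_lt (by omega)
        simp [hwk k, this]
      rw [this, zero_mul]
      exact mul_nonneg (hwnn j) (hann k)
  -- Vandermonde
  have hvan : ((2 * n).choose s : ℝ) = ∑ k ∈ R, a k := by
    have := Nat.add_choose_eq n n s
    rw [two_mul, this, Finset.Nat.sum_antidiagonal_eq_sum_range_succ_mk]
    push_cast [ha, hR]
    rfl
  -- positivity of denominators
  have hchoose_pos : (0:ℝ) < ((2 * n).choose s : ℝ) := by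
    exact_mod_cast Nat.choose_pos hs
  have hden_pos : 0 < ∑ k ∈ R, w k := by
    have hk₀ : min n s ∈ R := Finset.mem_range.2 (by omega)
    have hw₀ : 0 < w (min n s) := by
      rw [hwk]
      have hc1 : 0 < (n.choose (min n s) : ℝ) := by
        exact_mod_cast Nat.choose_pos (by omega)
      have hc2 : 0 < (n.choose (s - min n s) : ℝ) := by
        exact_mod_cast Nat.choose_pos (by omega)
      positivity
    calc (0:ℝ) < w (min n s) := hw₀
      _ ≤ ∑ k ∈ R, w k := Finset.single_le_sum (fun k _ => hwnn k) hk₀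
  rw [hnum, hden, div_le_div_iff₀ hden_pos hchoose_pos, hvan]
  exact fisher_cross R a w hLR c
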